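/- Let 𝒳 be a fundamental minimal system for 𝕏 whose dual system 𝒳* is bounded (sup_n ‖x_n*‖ < ∞). If the linear span ⟨𝒳*⟩ is not a norming subspace of 𝕏*, then for every ε > 0, r > 0 and m ∈ ℕ there exists f ∈ 𝕏 with the following properties: (i) f belongs to the linear span of 𝒳_{>m} and ‖f‖ = r; (ii) ‖f‖_∞ < ε; (iii) for each n > m and each δ > 0 there is g in the linear span of 𝒳_{>n} with ‖g‖_∞ < δ and ‖f + g‖ < ε. -/

import Mathlib

open Metric Submodule

section ThetaAux

variable {𝕜 : Type*} [RCLike 𝕜] {X : Type*} [NormedAddCommGroup X] [NormedSpace 𝕜 X]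

/-- The sup of `|g f|` over the unit ball of the span of the coordinate functionals. -/
noncomputable def thetaNN (xs : ℕ → X →L[𝕜] 𝕜) (f : X) : ℝ :=
  sSup {r : ℝ | ∃ g ∈ Submodule.span 𝕜 (Set.range xs), ‖g‖ ≤ 1 ∧ r = ‖g f‖}

lemma thetaNN_set_nonempty (xs : ℕ → X →L[𝕜] 𝕜) (f : X) :
    {r : ℝ | ∃ g ∈ Submodule.span 𝕜 (Set.range xs), ‖g‖ ≤ 1 ∧ r = ‖g f‖}.Nonempty :=
  ⟨0, 0, Submodule.zero_mem _, by simp, by simp⟩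

lemma thetaNN_bddAbove (xs : ℕ → X →L[𝕜] 𝕜) (f : X) :
    BddAbove {r : ℝ | ∃ g ∈ Submodule.span 𝕜 (Set.range xs), ‖g‖ ≤ 1 ∧ r = ‖g f‖} := by
  refine ⟨‖f‖, fun r hr => ?_⟩
  obtain ⟨g, _, hg1, rfl⟩ := hr
  calc ‖g f‖ ≤ ‖g‖ * ‖f‖ := g.le_opNorm f
    _ ≤ 1 * ‖f‖ := by gcongr
    _ = ‖f‖ := one_mul _

lemma le_thetaNN {xs : ℕ → X →L[𝕜] 𝕜} {f : X} {g : X →L[𝕜] 𝕜}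
    (hg : g ∈ Submodule.span 𝕜 (Set.range xs)) (hg1 : ‖g‖ ≤ 1) :
    ‖g f‖ ≤ thetaNN xs f :=
  le_csSup (thetaNN_bddAbove xs f) ⟨g, hg, hg1, rfl⟩

lemma thetaNN_nonneg (xs : ℕ → X →L[𝕜] 𝕜) (f : X) : 0 ≤ thetaNN xs f := by
  simpa using le_thetaNN (Submodule.zero_mem _) (by simp : ‖(0 : X →L[𝕜] 𝕜)‖ ≤ 1) (f := f)

lemma thetaNN_le_add (xs : ℕ → X →L[𝕜] 𝕜) (a b : X) :
    thetaNN xs a ≤ thetaNN xs b + ‖a - b‖ := by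
  refine csSup_le (thetaNN_set_nonempty xs a) fun r hr => ?_
  obtain ⟨g, hg, hg1, rfl⟩ := hr
  have h1 : ‖g a‖ ≤ ‖g b‖ + ‖g (a - b)‖ := by
    have : g a = g b + g (a - b) := by rw [map_sub]; ring
    rw [this]; exact norm_add_le _ _
  refine h1.trans (add_le_add (le_thetaNN hg hg1) ?_)
  calc ‖g (a - b)‖ ≤ ‖g‖ * ‖a - b‖ := g.le_opNorm _
    _ ≤ 1 * ‖a - b‖ := by gcongr
    _ = ‖a - b‖ := one_mul _

lemma thetaNN_smul_le (xs : ℕ → X →L[𝕜] 𝕜) (c : 𝕜) (f : X) :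
    thetaNN xs (c • f) ≤ ‖c‖ * thetaNN xs f := by
  refine csSup_le (thetaNN_set_nonempty xs _) fun r hr => ?_
  obtain ⟨g, hg, hg1, rfl⟩ := hr
  rw [map_smul, norm_smul]
  exact mul_le_mul_of_nonneg_left (le_thetaNN hg hg1) (norm_nonneg c)

lemma coord_zero_of_span {x : ℕ → X} {xs : ℕ → X →L[𝕜] 𝕜}
    (hbi : ∀ n k, xs n (x k) = if n = k then 1 else 0)
    {S : Set ℕ} {h : X} (hh : h ∈ Submodule.span 𝕜 (x '' S)) {i : ℕ} (hi : i ∉ S) :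
    xs i h = 0 := by
  have hle : Submodule.span 𝕜 (x '' S) ≤ LinearMap.ker (xs i : X →ₗ[𝕜] 𝕜) := by
    rw [Submodule.span_le]
    rintro _ ⟨k, hk, rfl⟩
    simp only [SetLike.mem_coe, LinearMap.mem_ker, ContinuousLinearMap.coe_coe]
    rw [hbi i k, if_neg (by rintro rfl; exact hi hk)]
  exact hle hh

lemma infDist_le_thetaNN (x : ℕ → X) (xs : ℕ → X →L[𝕜] 𝕜)
    (hdense : Dense (Submodule.span 𝕜 (Set.range x) : Set X))
    (hbi : ∀ n k, xs n (x k) = if n = k then 1 else 0)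
    (f : X) (q : ℕ) :
    infDist f (Submodule.span 𝕜 (x '' {k | q < k}) : Set X) ≤ thetaNN xs f := by
  set Y : Submodule 𝕜 X := (Submodule.span 𝕜 (x '' {k | q < k})).topologicalClosure with hY
  haveI : IsClosed (Y : Set X) := Submodule.isClosed_topologicalClosure _
  have hYc : (Y : Set X) = closure (Submodule.span 𝕜 (x '' {k | q < k}) : Set X) := rfl
  rw [← infDist_closure, ← hYc]
  by_cases h0 : (Submodule.Quotient.mk f : X ⧸ Y) = 0
  · have : f ∈ Y := (Submodule.Quotient.mk_eq_zero Y).mp h0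
    rw [infDist_zero_of_mem this]
    exact thetaNN_nonneg xs f
  obtain ⟨g, hg1, hgf⟩ := exists_dual_vector 𝕜 _ (norm_ne_zero_iff.mpr h0)
  set φlin : X →ₗ[𝕜] 𝕜 := g.toLinearMap.comp Y.mkQ with hφlin
  have hbound : ∀ v : X, ‖φlin v‖ ≤ 1 * ‖v‖ := by
    intro v
    calc ‖g (Submodule.Quotient.mk v)‖ ≤ ‖g‖ * ‖(Submodule.Quotient.mk v : X ⧸ Y)‖ :=
          g.le_opNorm _
      _ ≤ 1 * ‖v‖ := by
          rw [hg1]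
          exact mul_le_mul_of_nonneg_left (Submodule.Quotient.norm_mk_le Y v) zero_le_one
  set φ : X →L[𝕜] 𝕜 := φlin.mkContinuous 1 hbound with hφ
  have hφapp : ∀ v : X, φ v = g (Submodule.Quotient.mk v) := fun v => rfl
  have hφ1 : ‖φ‖ ≤ 1 := φlin.mkContinuous_norm_le zero_le_one hbound
  have hmkzero : ∀ j, q < j → φ (x j) = 0 := by
    intro j hj
    rw [hφapp]
    have hxj : x j ∈ Y :=
      (Submodule.le_topologicalClosure _) (Submodule.subset_span ⟨j, hj, rfl⟩)
    rw [(Submodule.Quotient.mk_eq_zero Y).mpr hxj, map_zero]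
  set ψ : X →L[𝕜] 𝕜 := φ - ∑ k ∈ Finset.range (q+1), φ (x k) • xs k with hψ
  have hψx : ∀ j, ψ (x j) = 0 := by
    intro j
    have hsum : (∑ k ∈ Finset.range (q+1), φ (x k) • xs k) (x j)
        = ∑ k ∈ Finset.range (q+1), φ (x k) * xs k (x j) := by
      simp [ContinuousLinearMap.sum_apply, smul_eq_mul]
    have hterm : ∀ k, φ (x k) * xs k (x j) = if k = j then φ (x k) else 0 := by
      intro k; rw [hbi k j]; split <;> simp
    simp only [hψ, ContinuousLinearMap.sub_apply, hsum]
    rw [Finset.sum_congr rfl fun k _ => hterm k, Finset.sum_ite_eq' (Finset.range (q+1)) j]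
    by_cases hj : j ∈ Finset.range (q+1)
    · rw [if_pos hj]; ring
    · rw [if_neg hj, hmkzero j (by simpa using hj)]; ring
  have hψ0 : ψ = 0 := by
    ext v
    have hker : (Submodule.span 𝕜 (Set.range x) : Set X) ⊆ {w : X | ψ w = 0} := by
      intro w hw
      have hle : Submodule.span 𝕜 (Set.range x) ≤ LinearMap.ker (ψ : X →ₗ[𝕜] 𝕜) := by
        rw [Submodule.span_le]
        rintro _ ⟨j, rfl⟩
        simpa using hψx j
      exact hle hw
    have hcl : IsClosed {w : X | ψ w = (0:𝕜)} := isClosed_eq ψ.continuous continuous_const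
    have huniv : (Set.univ : Set X) ⊆ {w : X | ψ w = 0} := by
      rw [← hdense.closure_eq]
      exact hcl.closure_subset_iff.mpr hker
    exact huniv (Set.mem_univ v)
  have hφeq : φ = ∑ k ∈ Finset.range (q+1), φ (x k) • xs k := sub_eq_zero.mp hψ0
  have hφmem : φ ∈ Submodule.span 𝕜 (Set.range xs) := by
    rw [hφeq]
    exact Submodule.sum_mem _ fun k _ =>
      Submodule.smul_mem _ _ (Submodule.subset_span ⟨k, rfl⟩)
  have hnormle : ‖(Submodule.Quotient.mk f : X ⧸ Y)‖ ≤ thetaNN xs f := by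
    have h1 : ‖φ f‖ = ‖(Submodule.Quotient.mk f : X ⧸ Y)‖ := by
      rw [hφapp, hgf, RCLike.norm_ofReal, abs_of_nonneg (norm_nonneg _)]
    rw [← h1]
    exact le_thetaNN hφmem hφ1
  refine le_trans ?_ hnormle
  refine le_of_forall_pos_le_add fun ρ hρ => ?_
  obtain ⟨s, hs, hlt⟩ := QuotientAddGroup.exists_norm_add_lt Y.toAddSubgroup f hρ
  have hmem : -s ∈ (Y : Set X) := Y.neg_mem hs
  calc infDist f (Y : Set X) ≤ dist f (-s) := infDist_le_dist_of_mem hmem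
    _ = ‖f + s‖ := by rw [dist_eq_norm, sub_neg_eq_add]
    _ ≤ ‖(Submodule.Quotient.mk f : X ⧸ Y)‖ + ρ := le_of_lt hlt

lemma span_finite_support (x : ℕ → X) (q : ℕ) {h : X}
    (hh : h ∈ Submodule.span 𝕜 (x '' {k | q < k})) :
    ∃ N : ℕ, q < N ∧ h ∈ Submodule.span 𝕜 (x '' {k | q < k ∧ k ≤ N}) := by
  obtain ⟨t, hts, hht⟩ := Submodule.mem_span_finite_of_mem_span hh
  classical
  set idx : X → ℕ := fun y => if hy : ∃ k, q < k ∧ x k = y then hy.choose else 0 with hidx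
  set N : ℕ := max (q+1) (t.sup idx) with hN
  refine ⟨N, lt_of_lt_of_le (Nat.lt_succ_self q) (le_max_left _ _), ?_⟩
  refine Submodule.span_mono ?_ hht
  intro y hy
  obtain ⟨k, hk, rfl⟩ := hts hy
  have hex : ∃ k', q < k' ∧ x k' = x k := ⟨k, hk, rfl⟩
  obtain ⟨hk1, hk2⟩ := hex.choose_spec
  refine ⟨hex.choose, ⟨hk1, ?_⟩, hk2⟩
  have hidxk : idx (x k) = hex.choose := by rw [hidx]; simp only [dif_pos hex]
  calc hex.choose = idx (x k) := hidxk.symm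
    _ ≤ t.sup idx := Finset.le_sup hy
    _ ≤ N := le_max_right _ _

lemma approx_step (x : ℕ → X) (xs : ℕ → X →L[𝕜] 𝕜)
    (hdense : Dense (Submodule.span 𝕜 (Set.range x) : Set X))
    (hbi : ∀ n k, xs n (x k) = if n = k then 1 else 0)
    (f : X) {e : ℝ} (hth : thetaNN xs f < e) (q : ℕ) :
    ∃ (N : ℕ) (h : X), q < N ∧ h ∈ Submodule.span 𝕜 (x '' {k | q < k ∧ k ≤ N}) ∧
      ‖f - h‖ < e := by
  have h1 : infDist f (Submodule.span 𝕜 (x '' {k | q < k}) : Set X) < e :=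
    lt_of_le_of_lt (infDist_le_thetaNN x xs hdense hbi f q) hth
  have hne : (Submodule.span 𝕜 (x '' {k | q < k}) : Set X).Nonempty :=
    ⟨0, Submodule.zero_mem _⟩
  obtain ⟨h, hmem, hdist⟩ := (infDist_lt_iff hne).mp h1
  obtain ⟨N, hqN, hmem'⟩ := span_finite_support x q hmem
  exact ⟨N, h, hqN, hmem', by rwa [dist_eq_norm] at hdist⟩

end ThetaAux

set_option maxHeartbeats 2000000 in
/-- If `𝒳*` is bounded and `⟨𝒳*⟩` is not a norming subspace of `𝕏*`, then for
all `ε > 0`, `r > 0` and `m ∈ ℕ` there is `f ∈ 𝕏` such that: (i) `f` lies in the span of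
`𝒳_{>m}` and `‖f‖ = r`; (ii) `‖f‖_∞ < ε`; (iii) for each `n > m` and each `δ > 0` there is `g`
in the span of `𝒳_{>n}` with `‖g‖_∞ < δ` and `‖f + g‖ < ε`. -/
theorem non_norming_gives_flat_almost_cancellable_vectors
    {𝕜 : Type*} [RCLike 𝕜] {X : Type*} [NormedAddCommGroup X] [NormedSpace 𝕜 X]
    [CompleteSpace X] [TopologicalSpace.SeparableSpace X]
    (hinf : ¬ FiniteDimensional 𝕜 X)
    (x : ℕ → X) (xs : ℕ → X →L[𝕜] 𝕜)
    (hdense : Dense (Submodule.span 𝕜 (Set.range x) : Set X))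
    (hbi : ∀ n k, xs n (x k) = if n = k then 1 else 0)
    (hxsb : ∃ M : ℝ, ∀ n, ‖xs n‖ ≤ M)
    (hnotnorming : ¬ ∃ c : ℝ, 0 < c ∧ c ≤ 1 ∧ ∀ f : X, c * ‖f‖ ≤
      sSup {r : ℝ | ∃ g ∈ Submodule.span 𝕜 (Set.range xs), ‖g‖ ≤ 1 ∧ r = ‖g f‖}) :
    ∀ ε : ℝ, 0 < ε → ∀ r : ℝ, 0 < r → ∀ m : ℕ, ∃ f : X,
      (f ∈ Submodule.span 𝕜 (x '' {n | m < n}) ∧ ‖f‖ = r) ∧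
      (⨆ n, ‖xs n f‖) < ε ∧
      (∀ n : ℕ, m < n → ∀ δ : ℝ, 0 < δ → ∃ g ∈ Submodule.span 𝕜 (x '' {k | n < k}),
        (⨆ i, ‖xs i g‖) < δ ∧ ‖f + g‖ < ε) := by
  classical
  obtain ⟨M, hM⟩ := hxsb
  set M' : ℝ := max M 1 with hM'def
  have hM'1 : (1:ℝ) ≤ M' := le_max_right _ _
  have hM'0 : (0:ℝ) < M' := lt_of_lt_of_le one_pos hM'1
  have hM' : ∀ n, ‖xs n‖ ≤ M' := fun n => (hM n).trans (le_max_left _ _)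
  -- coordinate bound via theta
  have hcoord : ∀ (i : ℕ) (f : X), ‖xs i f‖ ≤ M' * thetaNN xs f := by
    intro i f
    set g : X →L[𝕜] 𝕜 := ((M' : 𝕜))⁻¹ • xs i with hg
    have hgmem : g ∈ Submodule.span 𝕜 (Set.range xs) :=
      Submodule.smul_mem _ _ (Submodule.subset_span ⟨i, rfl⟩)
    have hMnorm : ‖((M' : ℝ) : 𝕜)⁻¹‖ = M'⁻¹ := by
      rw [norm_inv, RCLike.norm_ofReal, abs_of_pos hM'0]
    have hgn : ‖g‖ ≤ 1 := by
      have hns : ‖g‖ = ‖((M' : ℝ) : 𝕜)⁻¹‖ * ‖xs i‖ := by rw [hg]; exact norm_smul (((M' : ℝ) : 𝕜)⁻¹) (xs i)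
      rw [hns, hMnorm]
      calc M'⁻¹ * ‖xs i‖ ≤ M'⁻¹ * M' := by
            exact mul_le_mul_of_nonneg_left (hM' i) (inv_nonneg.mpr hM'0.le)
        _ = 1 := inv_mul_cancel₀ hM'0.ne'
    have hth := le_thetaNN hgmem hgn (f := f)
    have hgf : ‖g f‖ = M'⁻¹ * ‖xs i f‖ := by
      rw [hg]
      simp only [ContinuousLinearMap.smul_apply, norm_smul, hMnorm]
    rw [hgf] at hth
    calc ‖xs i f‖ = M' * (M'⁻¹ * ‖xs i f‖) := by field_simp
      _ ≤ M' * thetaNN xs f := mul_le_mul_of_nonneg_left hth hM'0.le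
  -- non-norming gives flat vectors
  have hnn : ∀ c : ℝ, 0 < c → c ≤ 1 → ∃ u : X, thetaNN xs u < c * ‖u‖ := by
    intro c hc hc1
    by_contra hcon
    push_neg at hcon
    exact hnotnorming ⟨c, hc, hc1, fun f => hcon f⟩
  intro ε hε r hr m
  set C : ℝ := ∑ k ∈ Finset.range (m+1), ‖x k‖ with hC
  have hC0 : 0 ≤ C := Finset.sum_nonneg fun k _ => norm_nonneg _
  set P : X →L[𝕜] X := ∑ k ∈ Finset.range (m+1), (xs k).smulRight (x k) with hP
  have hPapp : ∀ v, P v = ∑ k ∈ Finset.range (m+1), xs k v • x k := by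
    intro v
    simp [hP, ContinuousLinearMap.sum_apply, ContinuousLinearMap.smulRight_apply]
  set ε₁ : ℝ := ε / (2 * M') with hε₁
  have hε₁0 : 0 < ε₁ := div_pos hε (by positivity)
  set ε₂ : ℝ := min (r/4) (ε₁/16) with hε₂
  have hε₂0 : 0 < ε₂ := lt_min (by positivity) (by positivity)
  have hD0 : (0:ℝ) < 1 + M' * C := by positivity
  set c : ℝ := min 1 (ε₂ / (r * (1 + M' * C))) with hc
  have hc0 : 0 < c := lt_min one_pos (div_pos hε₂0 (by positivity))
  have hc1 : c ≤ 1 := min_le_left _ _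
  have hrc : r * c ≤ ε₂ := by
    have h1 : c ≤ ε₂ / (r * (1 + M' * C)) := min_le_right _ _
    have h2 : r * c ≤ r * (ε₂ / (r * (1 + M' * C))) := mul_le_mul_of_nonneg_left h1 hr.le
    have h3 : r * (ε₂ / (r * (1 + M' * C))) = ε₂ / (1 + M' * C) := by
      field_simp
    rw [h3] at h2
    refine h2.trans ?_
    rw [div_le_iff₀ hD0]
    nlinarith [hε₂0.le, mul_nonneg (mul_nonneg hε₂0.le hM'0.le) hC0]
  have hMCrc : M' * C * (r * c) ≤ ε₂ := by
    have h1 : c ≤ ε₂ / (r * (1 + M' * C)) := min_le_right _ _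
    have h2 : M' * C * (r * c) ≤ M' * C * (r * (ε₂ / (r * (1 + M' * C)))) := by
      refine mul_le_mul_of_nonneg_left ?_ (by positivity)
      exact mul_le_mul_of_nonneg_left h1 hr.le
    have h3 : r * (ε₂ / (r * (1 + M' * C))) = ε₂ / (1 + M' * C) := by field_simp
    rw [h3] at h2
    refine h2.trans ?_
    have h4 : M' * C * (ε₂ / (1 + M' * C)) = (M' * C * ε₂) / (1 + M' * C) := by ring
    rw [h4, div_le_iff₀ hD0]
    nlinarith [hε₂0.le, mul_nonneg hM'0.le hC0, mul_nonneg (mul_nonneg hM'0.le hC0) hε₂0.le]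
  set η : ℝ := ε₂ / (1 + ‖P‖) with hη
  have hPn0 : (0:ℝ) < 1 + ‖P‖ := by positivity
  have hη0 : 0 < η := div_pos hε₂0 hPn0
  -- get a flat vector and normalize
  obtain ⟨u, hu⟩ := hnn c hc0 hc1
  have hu0 : 0 < ‖u‖ := by
    rcases eq_or_lt_of_le (norm_nonneg u) with h | h
    · exfalso
      have := thetaNN_nonneg xs u
      rw [← h] at hu
      simp at hu
      linarith
    · exact h
  set u₁ : X := ((r / ‖u‖ : ℝ) : 𝕜) • u with hu₁def
  have hru : 0 < r / ‖u‖ := div_pos hr hu0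
  have hu₁norm : ‖u₁‖ = r := by
    rw [hu₁def, norm_smul, RCLike.norm_ofReal, abs_of_pos hru, div_mul_cancel₀ _ hu0.ne']
  have hθu₁ : thetaNN xs u₁ < r * c := by
    have h1 : thetaNN xs u₁ ≤ (r / ‖u‖) * thetaNN xs u := by
      have := thetaNN_smul_le xs ((r / ‖u‖ : ℝ) : 𝕜) u
      rwa [RCLike.norm_ofReal, abs_of_pos hru] at this
    have h2 : (r / ‖u‖) * thetaNN xs u < (r / ‖u‖) * (c * ‖u‖) :=
      mul_lt_mul_of_pos_left hu hru
    calc thetaNN xs u₁ ≤ (r / ‖u‖) * thetaNN xs u := h1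
      _ < (r / ‖u‖) * (c * ‖u‖) := h2
      _ = r * c := by field_simp
  -- approximate by an element of the span, remove head coordinates
  obtain ⟨v, hv, hvd⟩ := hdense.exists_dist_lt u₁ hη0
  have hvu : ‖v - u₁‖ < η := by
    rw [← dist_eq_norm, dist_comm]; exact hvd
  set v' : X := v - P v with hv'def
  have hv'mem : v' ∈ Submodule.span 𝕜 (x '' {n | m < n}) := by
    set Q : X →ₗ[𝕜] X := LinearMap.id - (P : X →ₗ[𝕜] X) with hQ
    have hle : Submodule.span 𝕜 (Set.range x) ≤
        (Submodule.span 𝕜 (x '' {n | m < n})).comap Q := by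
      rw [Submodule.span_le]
      rintro _ ⟨j, rfl⟩
      simp only [SetLike.mem_coe, Submodule.mem_comap, hQ, LinearMap.sub_apply,
        LinearMap.id_apply, ContinuousLinearMap.coe_coe]
      have hPxj : P (x j) = if j ∈ Finset.range (m+1) then x j else 0 := by
        rw [hPapp]
        have hterm : ∀ k, xs k (x j) • x k = if k = j then x j else 0 := by
          intro k
          rw [hbi k j]
          split
          · next h => subst h; simp
          · simp
        rw [Finset.sum_congr rfl fun k _ => hterm k,
          Finset.sum_ite_eq' (Finset.range (m+1)) j]
      by_cases hj : j ∈ Finset.range (m+1)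
      · rw [hPxj, if_pos hj, sub_self]; exact Submodule.zero_mem _
      · rw [hPxj, if_neg hj, sub_zero]
        exact Submodule.subset_span ⟨j, by simpa using hj, rfl⟩
    have := hle hv
    simpa [hQ] using this
  -- norm estimates
  have hPu₁ : ‖P u₁‖ ≤ M' * thetaNN xs u₁ * C := by
    rw [hPapp]
    calc ‖∑ k ∈ Finset.range (m+1), xs k u₁ • x k‖
        ≤ ∑ k ∈ Finset.range (m+1), ‖xs k u₁ • x k‖ := norm_sum_le _ _
      _ ≤ ∑ k ∈ Finset.range (m+1), (M' * thetaNN xs u₁) * ‖x k‖ := by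
          refine Finset.sum_le_sum fun k _ => ?_
          rw [norm_smul]
          exact mul_le_mul_of_nonneg_right (hcoord k u₁) (norm_nonneg _)
      _ = M' * thetaNN xs u₁ * C := by rw [← Finset.mul_sum]
  have hPv : ‖P v‖ ≤ ‖P‖ * η + M' * thetaNN xs u₁ * C := by
    calc ‖P v‖ ≤ ‖P (v - u₁)‖ + ‖P u₁‖ := by
          have : P v = P (v - u₁) + P u₁ := by rw [map_sub]; abel
          rw [this]; exact norm_add_le _ _
      _ ≤ ‖P‖ * η + M' * thetaNN xs u₁ * C := by
          refine add_le_add ?_ hPu₁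
          calc ‖P (v - u₁)‖ ≤ ‖P‖ * ‖v - u₁‖ := P.le_opNorm _
            _ ≤ ‖P‖ * η := mul_le_mul_of_nonneg_left hvu.le (norm_nonneg _)
  have hθu₁nonneg := thetaNN_nonneg xs u₁
  have hE : ‖v' - u₁‖ ≤ 2 * ε₂ := by
    have h1 : ‖v' - u₁‖ ≤ ‖v - u₁‖ + ‖P v‖ := by
      have : v' - u₁ = (v - u₁) - P v := by rw [hv'def]; abel
      rw [this]
      exact (norm_sub_le _ _)
    have h2 : η + ‖P‖ * η = ε₂ := by
      rw [hη]; field_simp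
    have h3 : M' * thetaNN xs u₁ * C ≤ ε₂ := by
      have h3a : M' * thetaNN xs u₁ * C = (M' * C) * thetaNN xs u₁ := by ring
      have h3b : (M' * C) * thetaNN xs u₁ ≤ (M' * C) * (r * c) :=
        mul_le_mul_of_nonneg_left hθu₁.le (mul_nonneg hM'0.le hC0)
      have h3c : (M' * C) * (r * c) = M' * C * (r * c) := by ring
      linarith [hMCrc]
    linarith [hvu.le, hPv]
  have hε₂r : ε₂ ≤ r / 4 := min_le_left _ _
  have hv'norm_lb : r / 2 ≤ ‖v'‖ := by
    have h1 : ‖u₁‖ - ‖v'‖ ≤ ‖u₁ - v'‖ := norm_sub_norm_le _ _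
    have h2 : ‖u₁ - v'‖ = ‖v' - u₁‖ := norm_sub_rev _ _
    rw [hu₁norm, h2] at h1
    linarith [hE]
  have hv'0 : 0 < ‖v'‖ := lt_of_lt_of_le (by linarith : (0:ℝ) < r / 2) hv'norm_lb
  have hθv' : thetaNN xs v' ≤ 3 * ε₂ := by
    have := thetaNN_le_add xs v' u₁
    have h2 : thetaNN xs u₁ ≤ ε₂ := le_trans hθu₁.le hrc
    linarith [hE]
  -- define f
  set f : X := ((r / ‖v'‖ : ℝ) : 𝕜) • v' with hfdef
  have hrv' : 0 < r / ‖v'‖ := div_pos hr hv'0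
  have hfnorm : ‖f‖ = r := by
    rw [hfdef, norm_smul, RCLike.norm_ofReal, abs_of_pos hrv', div_mul_cancel₀ _ hv'0.ne']
  have hfmem : f ∈ Submodule.span 𝕜 (x '' {n | m < n}) :=
    Submodule.smul_mem _ _ hv'mem
  have hrv'2 : r / ‖v'‖ ≤ 2 := by
    rw [div_le_iff₀ hv'0]
    linarith [hv'norm_lb]
  have hθf : thetaNN xs f ≤ 6 * ε₂ := by
    have h1 : thetaNN xs f ≤ (r / ‖v'‖) * thetaNN xs v' := by
      have := thetaNN_smul_le xs ((r / ‖v'‖ : ℝ) : 𝕜) v'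
      rwa [RCLike.norm_ofReal, abs_of_pos hrv'] at this
    have hθv'0 := (thetaNN_nonneg xs v')
    have h2 : (r / ‖v'‖) * thetaNN xs v' ≤ 2 * thetaNN xs v' :=
      mul_le_mul_of_nonneg_right hrv'2 hθv'0
    linarith
  have hε₂ε₁ : ε₂ ≤ ε₁ / 16 := min_le_right _ _
  have hθfε₁ : thetaNN xs f < ε₁ := by
    have : 6 * ε₂ ≤ 6 * (ε₁/16) := by linarith
    linarith [hε₁0]
  have hM'ε₁ : M' * ε₁ = ε / 2 := by
    rw [hε₁]; field_simp
  have hθfhalf : thetaNN xs f < ε / 2 := by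
    have h1 : ε₁ ≤ ε / 2 := by
      rw [hε₁, div_le_div_iff₀ (by positivity) (by norm_num : (0:ℝ) < 2)]
      nlinarith [hε.le]
    linarith
  refine ⟨f, ⟨hfmem, hfnorm⟩, ?_, ?_⟩
  · -- (ii) sup of coordinates < ε
    have hsup : (⨆ n, ‖xs n f‖) ≤ M' * thetaNN xs f :=
      ciSup_le fun n => hcoord n f
    have : M' * thetaNN xs f < M' * ε₁ := mul_lt_mul_of_pos_left hθfε₁ hM'0
    rw [hM'ε₁] at this
    linarith [hsup]
  · -- (iii)
    intro n hn δ hδ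
    obtain ⟨Nf, hNf, hfsupp⟩ := span_finite_support x m hfmem
    set n₀ : ℕ := max n Nf with hn₀
    have hstep : ∀ q : ℕ, ∃ (N : ℕ) (h : X), q < N ∧
        h ∈ Submodule.span 𝕜 (x '' {k | q < k ∧ k ≤ N}) ∧ ‖f - h‖ < ε / 2 :=
      fun q => approx_step x xs hdense hbi f hθfhalf q
    choose Nfun Hfun hNlt hHmem hHnorm using hstep
    set nseq : ℕ → ℕ := fun j => Nat.rec n₀ (fun _ ih => Nfun ih) j with hnseq
    have hnseq0 : nseq 0 = n₀ := rfl
    have hnseqsucc : ∀ j, nseq (j+1) = Nfun (nseq j) := fun j => rfl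
    have hnseqmono : StrictMono nseq := strictMono_nat_of_lt_succ fun j => by
      rw [hnseqsucc]; exact hNlt (nseq j)
    have hnseqge : ∀ j, n₀ ≤ nseq j := fun j => by
      have := hnseqmono.le_iff_le.mpr (Nat.zero_le j)
      simpa [hnseq0] using this
    set H : ℕ → X := fun j => Hfun (nseq j) with hH
    have hHmem' : ∀ j, H j ∈ Submodule.span 𝕜
        (x '' {k | nseq j < k ∧ k ≤ nseq (j+1)}) := fun j => by
      rw [hnseqsucc]; exact hHmem (nseq j)
    have hHnorm' : ∀ j, ‖f - H j‖ < ε / 2 := fun j => hHnorm (nseq j)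
    have hHbound : ∀ j, ‖H j‖ ≤ r + ε / 2 := fun j => by
      have h1 : ‖H j‖ ≤ ‖f‖ + ‖f - H j‖ := by
        have h0 : H j = f - (f - H j) := by abel
        calc ‖H j‖ = ‖f - (f - H j)‖ := by rw [← h0]
          _ ≤ ‖f‖ + ‖f - H j‖ := norm_sub_le f (f - H j)
      rw [hfnorm] at h1
      linarith [(hHnorm' j).le]
    set B : ℝ := M' * (r + ε) with hB
    have hB0 : 0 ≤ B := by positivity
    set p : ℕ := ⌈B / δ⌉₊ + 1 with hp
    have hp0 : 0 < p := Nat.succ_pos _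
    have hppos : (0:ℝ) < (p:ℝ) := by exact_mod_cast hp0
    have hpB : B / δ < (p:ℝ) := by
      calc B / δ ≤ (⌈B / δ⌉₊ : ℝ) := Nat.le_ceil _
        _ < (p:ℝ) := by exact_mod_cast Nat.lt_succ_self _
    have hBp : B / (p:ℝ) < δ := by
      rw [div_lt_iff₀ hppos]
      rw [div_lt_iff₀ hδ] at hpB
      linarith
    set g : X := -(((p:ℝ):𝕜)⁻¹ • ∑ j ∈ Finset.range p, H j) with hg
    have hp𝕜 : ((p:ℝ):𝕜) ≠ 0 := by
      simp only [ne_eq, RCLike.ofReal_eq_zero]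
      exact hppos.ne'
    refine ⟨g, ?_, ?_, ?_⟩
    · -- membership
      refine Submodule.neg_mem _ (Submodule.smul_mem _ _ (Submodule.sum_mem _ fun j _ => ?_))
      refine Submodule.span_mono ?_ (hHmem' j)
      rintro _ ⟨k, ⟨hk1, _⟩, rfl⟩
      exact ⟨k, lt_of_le_of_lt (le_trans (le_max_left n Nf) (hnseqge j)) hk1, rfl⟩
    · -- coordinates small
      have hcoordg : ∀ i, ‖xs i g‖ ≤ B / (p:ℝ) := by
        intro i
        have h1 : xs i g = -(((p:ℝ):𝕜)⁻¹ * ∑ j ∈ Finset.range p, xs i (H j)) := by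
          rw [hg]
          simp [map_sum, smul_eq_mul]
        have h2 : ‖xs i g‖ = (p:ℝ)⁻¹ * ‖∑ j ∈ Finset.range p, xs i (H j)‖ := by
          rw [h1, norm_neg, norm_mul, norm_inv, RCLike.norm_ofReal, abs_of_pos hppos]
        have h3 : ‖∑ j ∈ Finset.range p, xs i (H j)‖ ≤
            ∑ j ∈ Finset.range p, ‖xs i (H j)‖ := norm_sum_le _ _
        have h4 : ∑ j ∈ Finset.range p, ‖xs i (H j)‖ ≤ B := by
          classical
          set t : ℕ → ℝ := fun j => ‖xs i (H j)‖ with ht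
          have hfilter : ∑ j ∈ Finset.range p, t j
              = ∑ j ∈ (Finset.range p).filter (fun j => t j ≠ 0), t j :=
            (Finset.sum_filter_ne_zero _).symm
          have huniq : ∀ a ∈ (Finset.range p).filter (fun j => t j ≠ 0),
              ∀ b ∈ (Finset.range p).filter (fun j => t j ≠ 0), a = b := by
            intro a ha b hb
            have hmemint : ∀ j, t j ≠ 0 → nseq j < i ∧ i ≤ nseq (j+1) := by
              intro j hj
              by_contra hcon
              have hz : xs i (H j) = 0 :=
                coord_zero_of_span hbi (hHmem' j) (by simpa using hcon)
              exact hj (by simp [ht, hz])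
            have ha' := hmemint a (Finset.mem_filter.mp ha).2
            have hb' := hmemint b (Finset.mem_filter.mp hb).2
            by_contra hab
            rcases lt_or_gt_of_ne hab with h | h
            · have : nseq (a+1) ≤ nseq b := hnseqmono.le_iff_le.mpr h
              omega
            · have : nseq (b+1) ≤ nseq a := hnseqmono.le_iff_le.mpr h
              omega
          have hcard : ((Finset.range p).filter (fun j => t j ≠ 0)).card ≤ 1 :=
            Finset.card_le_one.mpr huniq
          have hbound : ∀ j ∈ (Finset.range p).filter (fun j => t j ≠ 0), t j ≤ B := by
            intro j _
            rw [ht, hB]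
            calc ‖xs i (H j)‖ ≤ ‖xs i‖ * ‖H j‖ := (xs i).le_opNorm _
              _ ≤ M' * (r + ε) := by
                  refine mul_le_mul (hM' i) ?_ (norm_nonneg _) hM'0.le
                  linarith [hHbound j]
          calc ∑ j ∈ Finset.range p, t j
              = ∑ j ∈ (Finset.range p).filter (fun j => t j ≠ 0), t j := hfilter
            _ ≤ ∑ _j ∈ (Finset.range p).filter (fun j => t j ≠ 0), B :=
                Finset.sum_le_sum hbound
            _ = ((Finset.range p).filter (fun j => t j ≠ 0)).card • B := by
                rw [Finset.sum_const]
            _ ≤ 1 * B := by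
                rw [nsmul_eq_mul]
                exact mul_le_mul_of_nonneg_right (by exact_mod_cast hcard) hB0
            _ = B := one_mul _
        calc ‖xs i g‖ = (p:ℝ)⁻¹ * ‖∑ j ∈ Finset.range p, xs i (H j)‖ := h2
          _ ≤ (p:ℝ)⁻¹ * B := by
              refine mul_le_mul_of_nonneg_left (h3.trans h4) (inv_nonneg.mpr hppos.le)
          _ = B / (p:ℝ) := by rw [div_eq_inv_mul]
      have : (⨆ i, ‖xs i g‖) ≤ B / (p:ℝ) := ciSup_le hcoordg
      linarith [hBp]
    · -- ‖f + g‖ < ε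
      have hkey : f + g = ((p:ℝ):𝕜)⁻¹ • ∑ j ∈ Finset.range p, (f - H j) := by
        rw [hg]
        have h1 : ∑ j ∈ Finset.range p, (f - H j)
            = p • f - ∑ j ∈ Finset.range p, H j := by
          rw [Finset.sum_sub_distrib, Finset.sum_const, Finset.card_range]
        rw [h1, smul_sub]
        have h2 : ((p:ℝ):𝕜)⁻¹ • (p • f) = f := by
          rw [← Nat.cast_smul_eq_nsmul 𝕜 p f, ← smul_assoc, smul_eq_mul]
          have : ((p:ℝ):𝕜) = (p:𝕜) := by norm_cast
          rw [this, inv_mul_cancel₀ (by exact_mod_cast hppos.ne' : (p:𝕜) ≠ 0), one_smul]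
        rw [h2]
        abel
      have hnorm : ‖f + g‖ ≤ (p:ℝ)⁻¹ * ∑ j ∈ Finset.range p, ‖f - H j‖ := by
        rw [hkey, norm_smul, norm_inv, RCLike.norm_ofReal, abs_of_pos hppos]
        exact mul_le_mul_of_nonneg_left (norm_sum_le _ _) (inv_nonneg.mpr hppos.le)
      have hsum : ∑ j ∈ Finset.range p, ‖f - H j‖ < (p:ℝ) * (ε / 2) := by
        have := Finset.sum_lt_sum_of_nonempty
          (Finset.nonempty_range_iff.mpr hp0.ne') (fun j _ => hHnorm' j)
        rwa [Finset.sum_const, Finset.card_range, nsmul_eq_mul] at this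
      have : ‖f + g‖ < (p:ℝ)⁻¹ * ((p:ℝ) * (ε / 2)) := by
        refine lt_of_le_of_lt hnorm ?_
        exact mul_lt_mul_of_pos_left hsum (inv_pos.mpr hppos)
      rw [inv_mul_cancel_left₀ hppos.ne'] at this
      linarith
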